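/- (Well-posedness of the optimality system) For every u_d ∈ L²(Q) and ϱ > 0, the saddle point problem: find (u,p) ∈ X₀ × X_T such that 𝓑(u,p;v,q) = −⟨u_d, q⟩_{L²(Q)} for all (v,q) ∈ Y×Y, admits a unique solution. -/

import Mathlib

private lemma aux_le {α β : Type*} [SeminormedAddCommGroup α] [SeminormedAddCommGroup β]
    (x : WithLp 2 (α × β)) : ‖WithLp.equiv 2 (α × β) x‖ ≤ ‖x‖ := by
  rw [WithLp.prod_norm_eq_of_L2, Prod.norm_def, WithLp.equiv_apply, WithLp.ofLp_fst, WithLp.ofLp_snd]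
  have h := Real.sq_sqrt (by positivity : (0:ℝ) ≤ ‖x.fst‖ ^ 2 + ‖x.snd‖ ^ 2)
  have h0 := Real.sqrt_nonneg (‖x.fst‖ ^ 2 + ‖x.snd‖ ^ 2)
  apply max_le <;> nlinarith [norm_nonneg x.fst, norm_nonneg x.snd]

private lemma aux_ge {α β : Type*} [SeminormedAddCommGroup α] [SeminormedAddCommGroup β]
    (x : WithLp 2 (α × β)) : ‖x‖ ≤ Real.sqrt 2 * ‖WithLp.equiv 2 (α × β) x‖ := by
  rw [WithLp.prod_norm_eq_of_L2, Prod.norm_def, WithLp.equiv_apply, WithLp.ofLp_fst, WithLp.ofLp_snd]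
  have h1 : ‖x.fst‖ ≤ max ‖x.fst‖ ‖x.snd‖ := le_max_left _ _
  have h2 : ‖x.snd‖ ≤ max ‖x.fst‖ ‖x.snd‖ := le_max_right _ _
  have hm : (0:ℝ) ≤ max ‖x.fst‖ ‖x.snd‖ := le_trans (norm_nonneg _) h1
  calc Real.sqrt (‖x.fst‖ ^ 2 + ‖x.snd‖ ^ 2)
      ≤ Real.sqrt (2 * (max ‖x.fst‖ ‖x.snd‖) ^ 2) := by
        apply Real.sqrt_le_sqrt; nlinarith [norm_nonneg x.fst, norm_nonneg x.snd]
    _ = Real.sqrt 2 * max ‖x.fst‖ ‖x.snd‖ := by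
        rw [Real.sqrt_mul (by norm_num), Real.sqrt_sq hm]

private theorem necas {Z W : Type*}
    [NormedAddCommGroup Z] [InnerProductSpace ℝ Z] [CompleteSpace Z]
    [NormedAddCommGroup W] [InnerProductSpace ℝ W] [CompleteSpace W]
    (A : Z →L[ℝ] W →L[ℝ] ℝ) {κ : ℝ} (hκ : 0 < κ)
    (hlow : ∀ z, κ * ‖z‖ ≤ ‖A z‖)
    (hinj : ∀ w : W, w ≠ 0 → ∃ z, A z w ≠ 0)
    (f : W →L[ℝ] ℝ) : ∃ z : Z, ∀ w, A z w = f w := by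
  classical
  let T : Z →ₗ[ℝ] W :=
    { toFun := fun z => (InnerProductSpace.toDual ℝ W).symm (A z)
      map_add' := fun x y => by simp
      map_smul' := fun r x => by simp }
  have hT : ∀ z w, (inner ℝ (T z) w : ℝ) = A z w := fun z w =>
    InnerProductSpace.toDual_symm_apply
  have hTnorm : ∀ z, ‖T z‖ = ‖A z‖ := fun z =>
    (InnerProductSpace.toDual ℝ W).symm.norm_map (A z)
  have hlip : LipschitzWith (1 * ‖A‖₊) T :=
    ((InnerProductSpace.toDual ℝ W).symm.isometry.lipschitz).comp A.lipschitz
  have hanti : AntilipschitzWith (Real.toNNReal κ⁻¹) T := by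
    apply AddMonoidHomClass.antilipschitz_of_bound
    intro x
    have h1 : κ * ‖x‖ ≤ ‖T x‖ := (hlow x).trans_eq (hTnorm x).symm
    rw [Real.coe_toNNReal _ (by positivity)]
    calc ‖x‖ = κ⁻¹ * (κ * ‖x‖) := by field_simp
      _ ≤ κ⁻¹ * ‖T x‖ := by
          exact mul_le_mul_of_nonneg_left h1 (by positivity)
  have hclosed : IsClosed (Set.range T) := hanti.isClosed_range hlip.uniformContinuous
  have hR : IsClosed ((LinearMap.range T : Submodule ℝ W) : Set W) := by
    rwa [LinearMap.coe_range]
  haveI : CompleteSpace (LinearMap.range T) := hR.completeSpace_coe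
  have hbot : (LinearMap.range T)ᗮ = ⊥ := by
    rw [Submodule.eq_bot_iff]
    intro w hw
    by_contra hw0
    obtain ⟨z, hz⟩ := hinj w hw0
    have h0 : (inner ℝ (T z) w : ℝ) = 0 :=
      (Submodule.mem_orthogonal _ w).mp hw (T z) (LinearMap.mem_range_self T z)
    rw [hT] at h0
    exact hz h0
  have htop : LinearMap.range T = ⊤ := Submodule.orthogonal_eq_bot_iff.mp hbot
  have hmem : (InnerProductSpace.toDual ℝ W).symm f ∈ LinearMap.range T := by
    rw [htop]; trivial
  obtain ⟨z, hz⟩ := hmem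
  refine ⟨z, fun w => ?_⟩
  have : (inner ℝ (T z) w : ℝ) = A z w := hT z w
  rw [hz] at this
  rw [← this, InnerProductSpace.toDual_symm_apply]


/-- well-posedness of the optimality system. `X₀`, `X_T` are the
Hilbert trial spaces and `Y` the Hilbert test space; `B` is the bounded
bilinear form `𝓑` on `(X₀ × X_T) × (Y × Y)`, satisfying the inf-sup
(stability) condition with constant `1/(2√2)` and the injectivity of the
adjoint. `g` is the continuous functional `q ↦ ⟨u_d, q⟩_{L²(Q)}` generated by
`u_d ∈ L²(Q)`. Then the saddle point problem: find `(u,p) ∈ X₀ × X_T` with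
`𝓑(u,p;v,q) = −⟨u_d,q⟩_{L²(Q)}` for all `(v,q) ∈ Y × Y`, has a unique
solution. -/
theorem stmt7 {X₀ XT Y : Type*}
    [NormedAddCommGroup X₀] [InnerProductSpace ℝ X₀] [CompleteSpace X₀]
    [NormedAddCommGroup XT] [InnerProductSpace ℝ XT] [CompleteSpace XT]
    [NormedAddCommGroup Y] [InnerProductSpace ℝ Y] [CompleteSpace Y]
    (B : (X₀ × XT) →ₗ[ℝ] (Y × Y) →ₗ[ℝ] ℝ) (c : ℝ)
    (hbound : ∀ z w, |B z w| ≤ c * ‖z‖ * ‖w‖)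
    (hinfsup : ∀ z : X₀ × XT, (1 / (2 * Real.sqrt 2)) * ‖z‖ ≤
        ⨆ w : {w : Y × Y // w ≠ 0}, B z (w : Y × Y) / ‖(w : Y × Y)‖)
    (hinj : ∀ w : Y × Y, w ≠ 0 → ∃ z : X₀ × XT, 0 < B z w)
    (g : Y →L[ℝ] ℝ) :
    ∃! up : X₀ × XT, ∀ vq : Y × Y, B up vq = -(g vq.2) := by
  classical
  have hs : Real.sqrt 2 ^ 2 = 2 := Real.sq_sqrt (by norm_num)
  have hspos : (0:ℝ) < Real.sqrt 2 := by positivity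
  have hp : (0:ℝ) < 1 / (2 * Real.sqrt 2) := by positivity
  -- uniqueness helper
  have huniq : ∀ z : X₀ × XT, (∀ w : Y × Y, B z w = 0) → z = 0 := by
    intro z hz
    have h := hinfsup z
    have hsup : (⨆ w : {w : Y × Y // w ≠ 0}, B z (w : Y × Y) / ‖(w : Y × Y)‖) ≤ 0 :=
      Real.iSup_nonpos (fun w => by rw [hz]; simp)
    have hmul : (1 / (2 * Real.sqrt 2)) * ‖z‖ ≤ 0 := h.trans hsup
    have hn : ‖z‖ ≤ 0 := by
      by_contra hcon
      push_neg at hcon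
      nlinarith [mul_pos hp hcon]
    exact norm_le_zero_iff.mp hn
  -- the spaces with Hilbert norms
  set eZ : WithLp 2 (X₀ × XT) ≃ₗ[ℝ] (X₀ × XT) := WithLp.linearEquiv 2 ℝ _ with heZ
  set eW : WithLp 2 (Y × Y) ≃ₗ[ℝ] (Y × Y) := WithLp.linearEquiv 2 ℝ _ with heW
  have heZa : ∀ z, eZ z = WithLp.equiv 2 (X₀ × XT) z := fun z => rfl
  have heWa : ∀ w, eW w = WithLp.equiv 2 (Y × Y) w := fun w => rfl
  -- the bilinear form as a continuous bilinear map
  have hbnd : ∀ (z : WithLp 2 (X₀ × XT)) (w : WithLp 2 (Y × Y)),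
      ‖((B.comp eZ.toLinearMap).compl₂ eW.toLinearMap) z w‖ ≤ max c 0 * ‖z‖ * ‖w‖ := by
    intro z w
    have h1 : ‖((B.comp eZ.toLinearMap).compl₂ eW.toLinearMap) z w‖ = |B (eZ z) (eW w)| := rfl
    rw [h1]
    calc |B (eZ z) (eW w)| ≤ c * ‖eZ z‖ * ‖eW w‖ := hbound _ _
      _ ≤ max c 0 * ‖eZ z‖ * ‖eW w‖ :=
          mul_le_mul_of_nonneg_right
            (mul_le_mul_of_nonneg_right (le_max_left c 0) (norm_nonneg _)) (norm_nonneg _)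
      _ ≤ max c 0 * ‖z‖ * ‖w‖ := by
          have h2 : ‖eZ z‖ ≤ ‖z‖ := by rw [heZa]; exact aux_le z
          have h3 : ‖eW w‖ ≤ ‖w‖ := by rw [heWa]; exact aux_le w
          have h4 : (0:ℝ) ≤ max c 0 := le_max_right c 0
          calc max c 0 * ‖eZ z‖ * ‖eW w‖
              ≤ max c 0 * ‖z‖ * ‖eW w‖ :=
                mul_le_mul_of_nonneg_right
                  (mul_le_mul_of_nonneg_left h2 h4) (norm_nonneg _)
            _ ≤ max c 0 * ‖z‖ * ‖w‖ :=
                mul_le_mul_of_nonneg_left h3 (by positivity)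
  obtain ⟨A, hAapp⟩ : ∃ A : (WithLp 2 (X₀ × XT)) →L[ℝ] (WithLp 2 (Y × Y)) →L[ℝ] ℝ,
      ∀ z w, A z w = B (eZ z) (eW w) :=
    ⟨LinearMap.mkContinuous₂ ((B.comp eZ.toLinearMap).compl₂ eW.toLinearMap) (max c 0) hbnd,
      fun z w => rfl⟩
  -- lower bound
  have hlow : ∀ z, (Real.sqrt 2 / 8) * ‖z‖ ≤ ‖A z‖ := by
    intro z
    have h := hinfsup (eZ z)
    have hsup : (⨆ w : {w : Y × Y // w ≠ 0}, B (eZ z) (w : Y × Y) / ‖(w : Y × Y)‖) ≤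
        Real.sqrt 2 * ‖A z‖ := by
      apply Real.iSup_le _ (by positivity)
      intro w
      have hwpos : 0 < ‖(w : Y × Y)‖ := norm_pos_iff.mpr w.2
      rw [div_le_iff₀ hwpos]
      have hkey : B (eZ z) (w : Y × Y) = A z (eW.symm (w : Y × Y)) := by
        rw [hAapp, eW.apply_symm_apply]
      rw [hkey]
      calc A z (eW.symm (w : Y × Y)) ≤ |A z (eW.symm (w : Y × Y))| := le_abs_self _
        _ ≤ ‖A z‖ * ‖eW.symm (w : Y × Y)‖ := (A z).le_opNorm _
        _ ≤ ‖A z‖ * (Real.sqrt 2 * ‖(w : Y × Y)‖) := by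
            have h5 : ‖eW.symm (w : Y × Y)‖ ≤ Real.sqrt 2 * ‖(w : Y × Y)‖ := by
              have := aux_ge (eW.symm (w : Y × Y))
              rwa [← heWa, eW.apply_symm_apply] at this
            exact mul_le_mul_of_nonneg_left h5 (by positivity)
        _ = Real.sqrt 2 * ‖A z‖ * ‖(w : Y × Y)‖ := by ring
    have h1 : (1 / (2 * Real.sqrt 2)) * ‖eZ z‖ ≤ Real.sqrt 2 * ‖A z‖ := h.trans hsup
    have h2 : ‖z‖ ≤ Real.sqrt 2 * ‖eZ z‖ := by rw [heZa]; exact aux_ge z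
    have h1' : ‖eZ z‖ ≤ 4 * ‖A z‖ := by
      have h3 := mul_le_mul_of_nonneg_left h1 (le_of_lt (by positivity : (0:ℝ) < 2 * Real.sqrt 2))
      have h4 : (2 * Real.sqrt 2) * ((1 / (2 * Real.sqrt 2)) * ‖eZ z‖) = ‖eZ z‖ := by
        field_simp
      rw [h4] at h3
      have h5 : 2 * Real.sqrt 2 * (Real.sqrt 2 * ‖A z‖) = 4 * ‖A z‖ := by
        rw [show (2:ℝ) * Real.sqrt 2 * (Real.sqrt 2 * ‖A z‖)
            = 2 * (Real.sqrt 2 ^ 2) * ‖A z‖ from by ring, hs]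
        ring
      linarith
    have h6 : Real.sqrt 2 * (Real.sqrt 2 * ‖eZ z‖) = 2 * ‖eZ z‖ := by
      rw [show Real.sqrt 2 * (Real.sqrt 2 * ‖eZ z‖)
          = (Real.sqrt 2 ^ 2) * ‖eZ z‖ from by ring, hs]
    have h7 : Real.sqrt 2 * ‖z‖ ≤ 2 * ‖eZ z‖ := by
      have := mul_le_mul_of_nonneg_left h2 hspos.le
      linarith
    linarith
  -- injectivity of the adjoint
  have hinj' : ∀ w : WithLp 2 (Y × Y), w ≠ 0 → ∃ z, A z w ≠ 0 := by
    intro w hw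
    have hw' : eW w ≠ 0 := fun h => hw (eW.injective (by simpa using h))
    obtain ⟨z₀, hz₀⟩ := hinj (eW w) hw'
    exact ⟨eZ.symm z₀, by rw [hAapp, eZ.apply_symm_apply]; exact ne_of_gt hz₀⟩
  -- the right-hand side functional
  have hfbnd : ∀ w : WithLp 2 (Y × Y),
      ‖(-(g.toLinearMap.comp ((LinearMap.snd ℝ Y Y).comp eW.toLinearMap))) w‖ ≤ ‖g‖ * ‖w‖ := by
    intro w
    have h1 : ‖(-(g.toLinearMap.comp ((LinearMap.snd ℝ Y Y).comp eW.toLinearMap))) w‖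
        = ‖g (eW w).2‖ := by
      simp [LinearMap.neg_apply]
    rw [h1]
    calc ‖g (eW w).2‖ ≤ ‖g‖ * ‖(eW w).2‖ := g.le_opNorm _
      _ ≤ ‖g‖ * ‖eW w‖ :=
          mul_le_mul_of_nonneg_left (norm_snd_le (eW w)) (norm_nonneg g)
      _ ≤ ‖g‖ * ‖w‖ := by
          have h3 : ‖eW w‖ ≤ ‖w‖ := by rw [heWa]; exact aux_le w
          exact mul_le_mul_of_nonneg_left h3 (norm_nonneg g)
  obtain ⟨f, hfapp⟩ : ∃ f : (WithLp 2 (Y × Y)) →L[ℝ] ℝ, ∀ w, f w = -(g (eW w).2) :=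
    ⟨LinearMap.mkContinuous
      (-(g.toLinearMap.comp ((LinearMap.snd ℝ Y Y).comp eW.toLinearMap))) ‖g‖ hfbnd,
      fun w => rfl⟩
  -- existence from the abstract theorem
  obtain ⟨z, hz⟩ := necas A (by positivity : (0:ℝ) < Real.sqrt 2 / 8) hlow hinj' f
  refine ⟨eZ z, fun vq => ?_, fun y hy => ?_⟩
  · have h1 : B (eZ z) vq = A z (eW.symm vq) := by rw [hAapp, eW.apply_symm_apply]
    rw [h1, hz, hfapp, eW.apply_symm_apply]
  · have hd := huniq (y - eZ z) (fun w => by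
      rw [map_sub, LinearMap.sub_apply, hy w]
      have h1 : B (eZ z) w = A z (eW.symm w) := by rw [hAapp, eW.apply_symm_apply]
      rw [h1, hz, hfapp, eW.apply_symm_apply]
      ring)
    exact sub_eq_zero.mp hd
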